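/- For any graph G with no isolated vertices, Z(G) ≤ Z(L(G)), i.e., the zero-forcing number of G is at most the zero-forcing number of its line graph. -/

import Mathlib

open scoped BigOperators

namespace Paper

variable {V : Type*}

/-- The zero-forcing closure: vertices that eventually become black starting from `S`. -/
inductive ZFClosure (G : SimpleGraph V) (S : Set V) : V → Prop
  | init {v : V} : v ∈ S → ZFClosure G S v
  | force {v w : V} : ZFClosure G S v → G.Adj v w →
      (∀ u, G.Adj v u → u ≠ w → ZFClosure G S u) → ZFClosure G S w

/-- `S` is a zero-forcing set of `G`. -/
def IsZeroForcingSet (G : SimpleGraph V) (S : Set V) : Prop :=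
  ∀ v : V, ZFClosure G S v

/-- The zero-forcing number `Z(G)`. -/
noncomputable def zfNumber (G : SimpleGraph V) : ℕ :=
  sInf {n | ∃ S : Set V, IsZeroForcingSet G S ∧ S.ncard = n}

/-- A state of the brushing process: the set of vertices that have fired (and hence
are clean), the set of dirty edges, and the number of brushes at each vertex. -/
structure BrushConfig (V : Type*) where
  fired : Set V
  dirty : Set (Sym2 V)
  brushes : V → ℕ

open Classical in
def BrushStep (G : SimpleGraph V) (restricted : Bool) (c c' : BrushConfig V) : Prop :=
  ∃ (v : V) (f : Sym2 V → ℕ),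
    v ∉ c.fired ∧
    (∀ e ∈ c.dirty, v ∈ e → if restricted then f e = 1 else 1 ≤ f e) ∧
    (∑ᶠ e ∈ {e ∈ c.dirty | v ∈ e}, f e) ≤ c.brushes v ∧
    c'.fired = insert v c.fired ∧
    c'.dirty = {e ∈ c.dirty | v ∉ e} ∧
    ∀ w : V, c'.brushes w =
      (if w = v then 0 else c.brushes w) + c.dirty.indicator f s(v, w)

/-- The initial brush configuration `ω` cleans the graph `G`:  starting with every vertex
and every edge dirty, some sequence of firings results in every vertex having fired. -/
def Cleans (G : SimpleGraph V) (restricted : Bool) (ω : V → ℕ) : Prop :=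
  ∃ c : BrushConfig V,
    Relation.ReflTransGen (BrushStep G restricted) ⟨∅, G.edgeSet, ω⟩ c ∧
    c.fired = Set.univ

/-- The brushing number `B(G)` (several brushes may traverse a single edge). -/
noncomputable def brushNumber (G : SimpleGraph V) : ℕ :=
  sInf {n | ∃ ω : V → ℕ, Cleans G false ω ∧ ∑ᶠ v, ω v = n}

/-- The restricted brushing number `b(G)` (each edge is traversed by exactly one brush). -/
noncomputable def brushNumber' (G : SimpleGraph V) : ℕ :=
  sInf {n | ∃ ω : V → ℕ, Cleans G true ω ∧ ∑ᶠ v, ω v = n}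


section Generic

variable {W : Type*}

theorem exists_force (H : SimpleGraph W) {S T : Set W} (hST : S ⊆ T) {x : W}
    (hx : ZFClosure H S x) :
    x ∈ T ∨ ∃ v w, v ∈ T ∧ w ∉ T ∧ H.Adj v w ∧ ∀ u, H.Adj v u → u ≠ w → u ∈ T := by
  induction hx with
  | init h => exact .inl (hST h)
  | @force v w hv hadj hu ihv ihu =>
    rcases ihv with hvT | hforce
    · by_cases hall : ∀ u, H.Adj v u → u ≠ w → u ∈ T
      · by_cases hwT : w ∈ T
        · exact .inl hwT
        · exact .inr ⟨v, w, hvT, hwT, hadj, hall⟩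
      · push_neg at hall
        obtain ⟨u, h1, h2, h3⟩ := hall
        rcases ihu u h1 h2 with h | h
        · exact absurd h h3
        · exact .inr h
    · exact .inr hforce

open Classical in
noncomputable def chron (H : SimpleGraph W) (B : Set W) : ℕ → Set W
  | 0 => B
  | t + 1 =>
    if h : ∃ p : W × W, p.1 ∈ chron H B t ∧ p.2 ∉ chron H B t ∧ H.Adj p.1 p.2 ∧
        ∀ u, H.Adj p.1 u → u ≠ p.2 → u ∈ chron H B t
    then insert h.choose.2 (chron H B t) else chron H B t

variable {H : SimpleGraph W} {B : Set W}

@[simp] lemma chron_zero : chron H B 0 = B := by rw [chron]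

lemma chron_succ_spec (t : ℕ) :
    chron H B (t + 1) = chron H B t ∨
      ∃ d e, d ∈ chron H B t ∧ e ∉ chron H B t ∧ H.Adj d e ∧
        (∀ u, H.Adj d u → u ≠ e → u ∈ chron H B t) ∧
        chron H B (t + 1) = insert e (chron H B t) := by
  rw [chron]
  split_ifs with h
  · obtain ⟨h1, h2, h3, h4⟩ := h.choose_spec
    exact .inr ⟨h.choose.1, h.choose.2, h1, h2, h3, h4, rfl⟩
  · exact .inl rfl

lemma chron_subset_succ (t : ℕ) : chron H B t ⊆ chron H B (t + 1) := by
  rcases chron_succ_spec (H := H) (B := B) t with h | ⟨d, e, _, _, _, _, h⟩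
  · rw [h]
  · rw [h]; exact Set.subset_insert _ _

lemma chron_mono {s t : ℕ} (h : s ≤ t) : chron H B s ⊆ chron H B t := by
  induction t with
  | zero => simp [Nat.le_zero.1 h]
  | succ t ih =>
    rcases Nat.lt_or_ge s (t + 1) with h' | h'
    · exact (ih (Nat.lt_succ_iff.1 h')).trans (chron_subset_succ t)
    · have : s = t + 1 := le_antisymm h h'
      rw [this]

lemma chron_univ_succ (t : ℕ) (h : chron H B t = Set.univ) :
    chron H B (t + 1) = Set.univ := by
  rcases chron_succ_spec (H := H) (B := B) t with h' | ⟨d, e, _, he, _, _, h'⟩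
  · rw [h', h]
  · exact absurd (h ▸ Set.mem_univ e) he

lemma chron_eventually_univ [Finite W] (hB : IsZeroForcingSet H B) :
    ∃ m, chron H B m = Set.univ := by
  have key : ∀ t, chron H B t = Set.univ ∨ t ≤ (chron H B t).ncard := by
    intro t
    induction t with
    | zero => exact .inr (Nat.zero_le _)
    | succ t ih =>
      by_cases hu : chron H B t = Set.univ
      · exact .inl (chron_univ_succ t hu)
      · rcases ih with h | h
        · exact absurd h hu
        · right
          -- find a force step
          obtain ⟨x, hx⟩ : ∃ x, x ∉ chron H B t := by
            by_contra hc
            push_neg at hc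
            exact hu (Set.eq_univ_iff_forall.2 hc)
          have hBsub : B ⊆ chron H B t := by
            have := chron_mono (H := H) (B := B) (Nat.zero_le t)
            simpa using this
          rcases exists_force H hBsub (hB x) with h' | ⟨v, w, hv, hw, hadj, hall⟩
          · exact absurd h' hx
          · have hcond : ∃ p : W × W, p.1 ∈ chron H B t ∧ p.2 ∉ chron H B t ∧
                H.Adj p.1 p.2 ∧ ∀ u, H.Adj p.1 u → u ≠ p.2 → u ∈ chron H B t :=
              ⟨(v, w), hv, hw, hadj, hall⟩
            rw [chron, dif_pos hcond]
            rw [Set.ncard_insert_of_notMem hcond.choose_spec.2.1 (Set.toFinite _)]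
            omega
  rcases key (Nat.card W + 1) with h | h
  · exact ⟨_, h⟩
  · exfalso
    have : (chron H B (Nat.card W + 1)).ncard ≤ Nat.card W := by
      have h2 := Set.ncard_le_ncard (Set.subset_univ (chron H B (Nat.card W + 1)))
        (Set.toFinite _)
      rwa [Set.ncard_univ] at h2
    omega

end Generic

section Cluster

variable [Fintype V] [LinearOrder V] (G : SimpleGraph V) (B : Set G.edgeSet)

/-- vertices all of whose incident edges are initially black -/
def AA : Set V := {v | ∀ ⦃w : V⦄ (h : G.Adj v w), (⟨s(v,w), h⟩ : G.edgeSet) ∈ B}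

def AAdj (x y : V) : Prop := G.Adj x y ∧ x ∈ AA G B ∧ y ∈ AA G B

def Reach (x y : V) : Prop := Relation.ReflTransGen (AAdj G B) x y

variable {G B}

lemma reach_symm {x y : V} (h : Reach G B x y) : Reach G B y x :=
  (@Relation.ReflTransGen.symmetric _ _ ⟨fun _ _ h' => ⟨h'.1.symm, h'.2.2, h'.2.1⟩⟩).symm _ _ h

lemma reach_trans {x y z : V} (h : Reach G B x y) (h' : Reach G B y z) : Reach G B x z :=
  Relation.ReflTransGen.trans h h'

variable (G B)

def cls (v : V) : Set V := {u | Reach G B v u}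

variable {G B}

lemma cls_eq {v u : V} (h : Reach G B v u) : cls G B v = cls G B u := by
  ext z
  exact ⟨fun hz => reach_trans (reach_symm h) hz, fun hz => reach_trans h hz⟩

variable (G B)

open Classical in
noncomputable def rep (v : V) : V :=
  (cls G B v).toFinset.min' ⟨v, Set.mem_toFinset.2 Relation.ReflTransGen.refl⟩

variable {G B}

lemma rep_reach (v : V) : Reach G B v (rep G B v) := by
  classical
  have := (cls G B v).toFinset.min'_mem ⟨v, Set.mem_toFinset.2 Relation.ReflTransGen.refl⟩
  have h2 : rep G B v ∈ (cls G B v).toFinset := by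
    rw [rep]
    convert this using 2 <;> exact Subsingleton.elim _ _
  exact Set.mem_toFinset.1 h2

lemma rep_congr {v u : V} (h : Reach G B v u) : rep G B v = rep G B u := by
  classical
  apply le_antisymm
  · have hm : rep G B u ∈ (cls G B v).toFinset := by
      rw [Set.mem_toFinset, cls_eq h]
      exact rep_reach u
    have := (cls G B v).toFinset.min'_le _ hm
    rw [rep]
    convert this using 2 <;> exact Subsingleton.elim _ _
  · have hm : rep G B v ∈ (cls G B u).toFinset := by
      rw [Set.mem_toFinset, ← cls_eq h]
      exact rep_reach v
    have := (cls G B u).toFinset.min'_le _ hm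
    rw [rep]
    convert this using 2 <;> exact Subsingleton.elim _ _

variable (G B)

def RN : ℕ → V → V → Prop
  | 0, x, y => x = y
  | n + 1, x, y => ∃ z, AAdj G B x z ∧ RN n z y

noncomputable def dd (v : V) : ℕ := sInf {n | RN G B n v (rep G B v)}

variable {G B}

lemma rn_tail {n : ℕ} {x y z : V} (h : RN G B n x y) (h' : AAdj G B y z) :
    RN G B (n + 1) x z := by
  induction n generalizing x with
  | zero => exact ⟨z, h ▸ h', rfl⟩
  | succ n ih =>
    obtain ⟨w, hw, hr⟩ := h
    exact ⟨w, hw, ih hr⟩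

lemma reach_to_RN {x y : V} (h : Reach G B x y) : ∃ n, RN G B n x y := by
  induction h with
  | refl => exact ⟨0, rfl⟩
  | tail _ h' ih => exact ⟨ih.choose + 1, rn_tail ih.choose_spec h'⟩

lemma parent_exists {v : V} (hrep : rep G B v ≠ v) :
    ∃ z, AAdj G B v z ∧ dd G B z < dd G B v ∧ rep G B z = rep G B v := by
  have hne : {n | RN G B n v (rep G B v)}.Nonempty := reach_to_RN (rep_reach v)
  have hd : RN G B (dd G B v) v (rep G B v) := Nat.sInf_mem hne
  rcases hn : dd G B v with _ | n
  · rw [hn] at hd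
    exact absurd hd.symm hrep
  · rw [hn] at hd
    obtain ⟨z, hz, hr⟩ := hd
    have hrz : rep G B z = rep G B v := (rep_congr (Relation.ReflTransGen.single hz)).symm
    have : dd G B z ≤ n := Nat.sInf_le (by rw [Set.mem_setOf_eq, hrz]; exact hr)
    exact ⟨z, hz, by omega, hrz⟩

variable (G B)

def IsolRep (r : V) : Prop := r ∈ AA G B ∧ rep G B r = r ∧ ∀ w, G.Adj r w → w ∉ AA G B

def Sat (t : ℕ) (v : V) : Prop :=
  ∀ ⦃w : V⦄ (h : G.Adj v w), (⟨s(v,w), h⟩ : G.edgeSet) ∈ chron G.lineGraph B t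

noncomputable def tau (v : V) : ℕ := sInf {t | Sat G B t v}

variable {G B}

lemma sat_mono {s t : ℕ} (hst : s ≤ t) {v : V} (h : Sat G B s v) : Sat G B t v :=
  fun w hw => chron_mono hst (h hw)

lemma sat_zero_iff {v : V} : Sat G B 0 v ↔ v ∈ AA G B := by
  unfold Sat AA
  simp only [chron_zero]
  rfl

lemma tau_le_iff {v : V} (hne : ∃ t, Sat G B t v) {t : ℕ} :
    tau G B v ≤ t ↔ Sat G B t v := by
  constructor
  · intro h
    exact sat_mono h (Nat.sInf_mem hne)
  · intro h
    exact Nat.sInf_le h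

lemma tau_zero_iff {v : V} (hne : ∃ t, Sat G B t v) :
    tau G B v = 0 ↔ v ∈ AA G B := by
  rw [← Nat.le_zero, tau_le_iff hne, sat_zero_iff]

end Cluster

section Main

variable {V : Type*}

theorem main_aux [Fintype V] [LinearOrder V] (G : SimpleGraph V)
    (hiso : ∀ v : V, ∃ w, G.Adj v w) (B : Set G.edgeSet)
    (hB : IsZeroForcingSet G.lineGraph B) :
    ∃ S : Set V, IsZeroForcingSet G S ∧ S.ncard ≤ B.ncard := by
  classical
  obtain ⟨m, hm⟩ := chron_eventually_univ hB
  have hSatm : ∀ v : V, Sat G B m v := fun v w h => by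
    change _ ∈ chron G.lineGraph B m
    rw [hm]; trivial
  have hne : ∀ v : V, ∃ t, Sat G B t v := fun v => ⟨m, hSatm v⟩
  choose p hp1 hp2 hp3 using fun (v : V) (h : rep G B v ≠ v) => parent_exists h
  choose om hom using hiso
  set bdcond : V → Prop := fun x => ∃ u, u ∈ AA G B ∧ G.Adj x u ∧
      ¬(IsolRep G B u ∧ x = om u) with hbdcond
  set agcond : V → Prop := fun x => ∃ (y : V) (h : G.Adj x y),
      (⟨s(x,y), h⟩ : G.edgeSet) ∈ B ∧ y ∉ AA G B ∧ tau G B y < tau G B x with hagcond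
  set S : Set V := {v | (v ∈ AA G B ∧ rep G B v ≠ v) ∨ IsolRep G B v ∨
      (v ∉ AA G B ∧ bdcond v) ∨ (v ∉ AA G B ∧ agcond v)} with hSdef
  have hSnr : ∀ v, v ∈ AA G B → rep G B v ≠ v → v ∈ S := fun v h1 h2 => Or.inl ⟨h1, h2⟩
  have hSisol : ∀ v, IsolRep G B v → v ∈ S := fun v h => Or.inr (Or.inl h)
  have hSbd : ∀ v, v ∉ AA G B → bdcond v → v ∈ S := fun v h1 h2 => Or.inr (Or.inr (Or.inl ⟨h1, h2⟩))
  have hSag : ∀ v, v ∉ AA G B → agcond v → v ∈ S := fun v h1 h2 => Or.inr (Or.inr (Or.inr ⟨h1, h2⟩))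
  -- Base case: all of A and its neighborhood is in the closure
  have hA_VC : ∀ v ∈ AA G B, ZFClosure G S v := by
    intro v hv
    by_cases hrep : rep G B v = v
    · by_cases hisol : ∀ w, G.Adj v w → w ∉ AA G B
      · exact .init (hSisol v ⟨hv, hrep, hisol⟩)
      · push_neg at hisol
        obtain ⟨c, hc1, hc2⟩ := hisol
        have hcadj : AAdj G B v c := ⟨hc1, hv, hc2⟩
        have hrc : rep G B c = v := by
          rw [← rep_congr (Relation.ReflTransGen.single hcadj), hrep]
        have hcne : c ≠ v := fun h => G.irrefl (h ▸ hc1)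
        have hcS : c ∈ S := hSnr c hc2 (by rw [hrc]; exact hcne.symm)
        refine ZFClosure.force (.init hcS) hc1.symm ?_
        intro u hu hune
        by_cases huA : u ∈ AA G B
        · have hru : rep G B u = v := by
            rw [← rep_congr (Relation.ReflTransGen.single (⟨hu, hc2, huA⟩ : AAdj G B c u)), hrc]
          exact .init (hSnr u huA (by rw [hru]; exact hune.symm))
        · refine .init (hSbd u huA ⟨c, hc2, hu.symm, ?_⟩)
          rintro ⟨hci, -⟩
          exact hcne ((hci.2.1).symm.trans hrc)
    · exact .init (hSnr v hv hrep)
  have hANbr_VC : ∀ v ∈ AA G B, ∀ w, G.Adj v w → ZFClosure G S w := by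
    intro v hv w hw
    by_cases hwA : w ∈ AA G B
    · exact hA_VC w hwA
    · by_cases hbd : bdcond w
      · exact .init (hSbd w hwA hbd)
      · have hv' : IsolRep G B v ∧ w = om v := by
          by_contra hc
          exact hbd ⟨v, hv, hw.symm, hc⟩
        refine ZFClosure.force (.init (hSisol v hv'.1)) hw ?_
        intro u hu hune
        have huA : u ∉ AA G B := hv'.1.2.2 u hu
        refine .init (hSbd u huA ⟨v, hv, hu.symm, ?_⟩)
        rintro ⟨-, h⟩
        exact hune (h.trans hv'.2.symm)
  -- The grand induction along the chronology
  have key : ∀ t : ℕ,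
      (∀ v : V, tau G B v ≤ t → ZFClosure G S v ∧ ∀ w, G.Adj v w → ZFClosure G S w) ∧
      (∀ e : G.edgeSet, e ∈ chron G.lineGraph B t → e ∉ B →
        ∀ x ∈ (e : Sym2 V), ZFClosure G S x) := by
    intro t
    induction t with
    | zero =>
      refine ⟨?_, ?_⟩
      · intro v hv
        have hvA : v ∈ AA G B := (tau_zero_iff (hne v)).1 (Nat.le_zero.1 hv)
        exact ⟨hA_VC v hvA, fun w hw => hANbr_VC v hvA w hw⟩
      · intro e he heB
        rw [chron_zero] at he
        exact absurd he heB
    | succ t ih =>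
      rcases chron_succ_spec (H := G.lineGraph) (B := B) t with heq | hstep
      · refine ⟨?_, ?_⟩
        · intro v hv
          apply ih.1
          have hs : Sat G B (t+1) v := (tau_le_iff (hne v)).1 hv
          have hs' : Sat G B t v := fun w h => by
            have h2 := hs h; rwa [heq] at h2
          exact (tau_le_iff (hne v)).2 hs'
        · intro e he heB
          rw [heq] at he
          exact ih.2 e he heB
      · obtain ⟨d, e, hd, he, hadj, hall, hsucc⟩ := hstep
        obtain ⟨hdne, sv, hsvd, hsve⟩ := (SimpleGraph.lineGraph_adj_iff_exists).1 hadj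
        obtain ⟨u, hdu⟩ := Sym2.mem_iff_exists.1 hsvd
        obtain ⟨w, hew⟩ := Sym2.mem_iff_exists.1 hsve
        have hsvu : G.Adj sv u := G.mem_edgeSet.1 (hdu ▸ d.prop)
        have hsvw : G.Adj sv w := G.mem_edgeSet.1 (hew ▸ e.prop)
        have huw : u ≠ w := by
          intro h
          exact hdne (Subtype.ext (by rw [hdu, hew, h]))
        -- all edges at u are black at time t
        have hallu : ∀ ⦃x : V⦄ (h : G.Adj u x),
            (⟨s(u,x), h⟩ : G.edgeSet) ∈ chron G.lineGraph B t := by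
          intro x h
          by_cases hxd : (⟨s(u,x), h⟩ : G.edgeSet) = d
          · rw [hxd]; exact hd
          · apply hall
            · rw [SimpleGraph.lineGraph_adj_iff_exists]
              exact ⟨fun hh => hxd hh.symm, u, by rw [hdu]; simp, by simp⟩
            · intro hh
              have hmem : u ∈ (e : Sym2 V) := by rw [← hh]; simp
              rw [hew] at hmem
              rcases Sym2.mem_iff.1 hmem with h1 | h1
              · exact hsvu.ne' h1
              · exact huw h1
        have hsvedges : ∀ ⦃x : V⦄ (h : G.Adj sv x), x ≠ w →
            (⟨s(sv,x), h⟩ : G.edgeSet) ∈ chron G.lineGraph B t := by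
          intro x h hxw
          by_cases hxd : (⟨s(sv,x), h⟩ : G.edgeSet) = d
          · rw [hxd]; exact hd
          · apply hall
            · rw [SimpleGraph.lineGraph_adj_iff_exists]
              exact ⟨fun hh => hxd hh.symm, sv, by rw [hdu]; simp, by simp⟩
            · intro hh
              have h2 : s(sv, x) = s(sv, w) := by
                have := congrArg Subtype.val hh
                rwa [hew] at this
              exact hxw (Sym2.congr_right.1 h2)
        have htauu : tau G B u ≤ t := (tau_le_iff (hne u)).2 (fun x h => hallu h)
        have hsv_VC : ZFClosure G S sv := (ih.1 u htauu).2 sv hsvu.symm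
        have hsvsat : Sat G B (t+1) sv := by
          intro x h
          by_cases hxw : x = w
          · subst hxw
            have hid : (⟨s(sv,x), h⟩ : G.edgeSet) = e := Subtype.ext hew.symm
            rw [hid, hsucc]
            exact Set.mem_insert _ _
          · exact chron_subset_succ t (hsvedges h hxw)
        have htausv : tau G B sv ≤ t + 1 := (tau_le_iff (hne sv)).2 hsvsat
        -- vertices saturating exactly at t+1 are endpoints of e
        have hnew : ∀ z : V, ¬ Sat G B t z → Sat G B (t+1) z → z = sv ∨ z = w := by
          intro z h0 h1
          by_contra hc
          push_neg at hc
          apply h0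
          intro y hy
          have hmem := h1 hy
          rw [hsucc] at hmem
          rcases Set.mem_insert_iff.1 hmem with hh | hh
          · exfalso
            have hzm : z ∈ (e : Sym2 V) := by rw [← hh]; simp
            rw [hew] at hzm
            rcases Sym2.mem_iff.1 hzm with h2 | h2
            · exact hc.1 h2
            · exact hc.2 h2
          · exact hh
        have hnbrs_sv : ∀ x, G.Adj sv x → x ≠ w → ZFClosure G S x := by
          intro x hx hxw
          have hgt : (⟨s(sv,x), hx⟩ : G.edgeSet) ∈ chron G.lineGraph B t := hsvedges hx hxw
          by_cases hgB : (⟨s(sv,x), hx⟩ : G.edgeSet) ∈ B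
          · by_cases hxA : x ∈ AA G B
            · refine (ih.1 x ?_).1
              have h0 : tau G B x = 0 := (tau_zero_iff (hne x)).2 hxA
              omega
            · by_cases hsvA : sv ∈ AA G B
              · have h0 : tau G B sv = 0 := (tau_zero_iff (hne sv)).2 hsvA
                exact (ih.1 sv (by omega)).2 x hx
              · by_cases htx : tau G B x ≤ t
                · exact (ih.1 x htx).1
                · have htx1 : tau G B x ≠ t + 1 := by
                    intro hxt
                    rcases hnew x (fun hs => htx ((tau_le_iff (hne x)).2 hs))
                        ((tau_le_iff (hne x)).1 hxt.le) with h2 | h2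
                    · exact hx.ne' h2
                    · exact hxw h2
                  have htgt : tau G B sv < tau G B x := by omega
                  refine .init (hSag x hxA ⟨sv, hx.symm, ?_, hsvA, htgt⟩)
                  have hid : (⟨s(x,sv), hx.symm⟩ : G.edgeSet) = ⟨s(sv,x), hx⟩ :=
                    Subtype.ext Sym2.eq_swap
                  rw [hid]
                  exact hgB
          · exact ih.2 _ hgt hgB x (by simp)
        have hw_VC : ZFClosure G S w := .force hsv_VC hsvw hnbrs_sv
        have part2 : ∀ e' : G.edgeSet, e' ∈ chron G.lineGraph B (t+1) → e' ∉ B →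
            ∀ x ∈ (e' : Sym2 V), ZFClosure G S x := by
          intro e' he' he'B x hx
          rw [hsucc] at he'
          rcases Set.mem_insert_iff.1 he' with h1 | h1
          · subst h1
            rw [hew] at hx
            rcases Sym2.mem_iff.1 hx with h2 | h2
            · exact h2 ▸ hsv_VC
            · exact h2 ▸ hw_VC
          · exact ih.2 e' h1 he'B x hx
        refine ⟨?_, part2⟩
        intro v hv
        by_cases hvt : tau G B v ≤ t
        · exact ih.1 v hvt
        · have hs1 : Sat G B (t+1) v := (tau_le_iff (hne v)).1 hv
          have hs0 : ¬ Sat G B t v := fun hs => hvt ((tau_le_iff (hne v)).2 hs)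
          rcases hnew v hs0 hs1 with hcv | hcv
          · rw [hcv]
            refine ⟨hsv_VC, fun x hx => ?_⟩
            by_cases hxw : x = w
            · exact hxw ▸ hw_VC
            · exact hnbrs_sv x hx hxw
          · rw [hcv] at hs1 hvt hv ⊢
            refine ⟨hw_VC, fun x hx => ?_⟩
            have hmem := hs1 hx
            rw [hsucc] at hmem
            rcases Set.mem_insert_iff.1 hmem with h1 | h1
            · have hxm : x ∈ (e : Sym2 V) := by rw [← h1]; simp
              rw [hew] at hxm
              rcases Sym2.mem_iff.1 hxm with h2 | h2
              · exact h2 ▸ hsv_VC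
              · exact absurd h2 hx.ne'
            · by_cases hgB : (⟨s(w,x), hx⟩ : G.edgeSet) ∈ B
              · by_cases hxA : x ∈ AA G B
                · refine (ih.1 x ?_).1
                  have h0 : tau G B x = 0 := (tau_zero_iff (hne x)).2 hxA
                  omega
                · by_cases htx : tau G B x ≤ t
                  · exact (ih.1 x htx).1
                  · by_cases htx1 : tau G B x = t + 1
                    · rcases hnew x (fun hs => htx ((tau_le_iff (hne x)).2 hs))
                          ((tau_le_iff (hne x)).1 htx1.le) with rfl | rfl
                      · exact hsv_VC
                      · exact hw_VC
                    · have hwA : w ∉ AA G B := by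
                        intro hwA'
                        have h0 : tau G B w = 0 := (tau_zero_iff (hne w)).2 hwA'
                        have h1' : tau G B w ≤ t := by omega
                        exact hvt h1'
                      have htw1 : tau G B w ≤ t + 1 := hv
                      refine .init (hSag x hxA ⟨w, hx.symm, ?_, hwA, by omega⟩)
                      have hid : (⟨s(x,w), hx.symm⟩ : G.edgeSet) = ⟨s(w,x), hx⟩ :=
                        Subtype.ext Sym2.eq_swap
                      rw [hid]
                      exact hgB
              · exact ih.2 _ h1 hgB x (by simp)
  -- S is a zero forcing set
  have hZFS : IsZeroForcingSet G S := fun v =>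
    ((key m).1 v ((tau_le_iff (hne v)).2 (hSatm v))).1
  -- cardinality bound
  set π : V → V := fun v =>
    if hA : v ∈ AA G B then (if hr : rep G B v = v then om v else p v hr)
    else if hbd : bdcond v then hbd.choose
    else if hag : agcond v then hag.choose
    else v
    with hπdef
  set φ : V → Sym2 V := fun v => s(v, π v) with hφdef
  have hcases : ∀ v ∈ S, (φ v ∈ Subtype.val '' B) ∧
      ((v ∈ AA G B ∧ IsolRep G B v ∧ π v = om v ∧ π v ∉ AA G B) ∨
       (v ∈ AA G B ∧ π v ∈ AA G B ∧ dd G B (π v) < dd G B v) ∨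
       (v ∉ AA G B ∧ π v ∈ AA G B ∧ ¬(IsolRep G B (π v) ∧ v = om (π v))) ∨
       (v ∉ AA G B ∧ π v ∉ AA G B ∧ tau G B (π v) < tau G B v)) := by
    intro v hv
    rcases hv with ⟨hvA, hrep⟩ | hvI | ⟨hvA, hbd⟩ | ⟨hvA, hag⟩
    · -- nonrep in A
      have hπv : π v = p v hrep := by
        rw [hπdef]; simp only []
        rw [dif_pos hvA, dif_neg hrep]
      have hpp := hp1 v hrep
      refine ⟨?_, Or.inr (Or.inl ⟨hvA, by rw [hπv]; exact hpp.2.2, by rw [hπv]; exact hp2 v hrep⟩)⟩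
      show s(v, π v) ∈ Subtype.val '' B
      rw [hπv]
      exact ⟨⟨s(v, p v hrep), hpp.1⟩, hvA hpp.1, rfl⟩
    · -- isolated rep
      have hπv : π v = om v := by
        rw [hπdef]; simp only []
        rw [dif_pos hvI.1, dif_pos hvI.2.1]
      refine ⟨?_, Or.inl ⟨hvI.1, hvI, hπv, by rw [hπv]; exact hvI.2.2 _ (hom v)⟩⟩
      show s(v, π v) ∈ Subtype.val '' B
      rw [hπv]
      exact ⟨⟨s(v, om v), hom v⟩, hvI.1 (hom v), rfl⟩
    · -- boundary
      have hπv : π v = hbd.choose := by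
        rw [hπdef]; simp only []
        rw [dif_neg hvA, dif_pos hbd]
      obtain ⟨hcA, hcadj, hcneg⟩ := hbd.choose_spec
      refine ⟨?_, Or.inr (Or.inr (Or.inl ⟨hvA, by rw [hπv]; exact hcA, by rw [hπv]; exact hcneg⟩))⟩
      show s(v, π v) ∈ Subtype.val '' B
      rw [hπv]
      exact ⟨⟨s(hbd.choose, v), hcadj.symm⟩, hcA hcadj.symm, Sym2.eq_swap⟩
    · -- argmax (or boundary if both)
      by_cases hbd : bdcond v
      · have hπv : π v = hbd.choose := by
          rw [hπdef]; simp only []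
          rw [dif_neg hvA, dif_pos hbd]
        obtain ⟨hcA, hcadj, hcneg⟩ := hbd.choose_spec
        refine ⟨?_, Or.inr (Or.inr (Or.inl ⟨hvA, by rw [hπv]; exact hcA, by rw [hπv]; exact hcneg⟩))⟩
        show s(v, π v) ∈ Subtype.val '' B
        rw [hπv]
        exact ⟨⟨s(hbd.choose, v), hcadj.symm⟩, hcA hcadj.symm, Sym2.eq_swap⟩
      · have hπv : π v = hag.choose := by
          rw [hπdef]; simp only []
          rw [dif_neg hvA, dif_neg hbd, dif_pos hag]
        obtain ⟨hadj, hmemB, hynA, htau⟩ := hag.choose_spec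
        refine ⟨?_, Or.inr (Or.inr (Or.inr ⟨hvA, by rw [hπv]; exact hynA, by rw [hπv]; exact htau⟩))⟩
        show s(v, π v) ∈ Subtype.val '' B
        rw [hπv]
        exact ⟨⟨s(v, hag.choose), hadj⟩, hmemB, rfl⟩
  have hinj : Set.InjOn φ S := by
    intro v hv v' hv' heq
    by_contra hvv
    have h1 := hcases v hv
    have h2 := hcases v' hv'
    have heq' : s(v, π v) = s(v', π v') := heq
    rcases Sym2.eq_iff.1 heq' with ⟨h, -⟩ | ⟨hvp, hpv⟩
    · exact hvv h
    · -- hvp : v = π v', hpv : π v = v'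
      rcases h1.2 with ⟨hA1, hI1, hω1, hπn1⟩ | ⟨hA1, hπA1, hdd1⟩ | ⟨hnA1, hπA1, hnc1⟩ |
        ⟨hnA1, hπn1, ht1⟩ <;>
        rcases h2.2 with ⟨hA2, hI2, hω2, hπn2⟩ | ⟨hA2, hπA2, hdd2⟩ | ⟨hnA2, hπA2, hnc2⟩ |
          ⟨hnA2, hπn2, ht2⟩
      · exact hπn2 (hvp ▸ hA1)
      · exact hπn1 (hpv.symm ▸ hA2)
      · refine hnc2 ⟨hvp ▸ hI1, ?_⟩
        rw [← hvp, ← hω1]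
        exact hpv.symm
      · exact hπn2 (hvp ▸ hA1)
      · exact hπn2 (hvp ▸ hA1)
      · have h6 : v' = π v := hpv.symm
        have h7 : v = π v' := hvp
        rw [← h6] at hdd1
        rw [← h7] at hdd2
        omega
      · exact hnA2 (hpv ▸ hπA1)
      · exact hπn2 (hvp ▸ hA1)
      · refine hnc1 ⟨by rw [hpv]; exact hI2, ?_⟩
        rw [hpv, ← hω2]
        exact hvp
      · exact hnA1 (hvp.symm ▸ hπA2)
      · exact hnA2 (hpv ▸ hπA1)
      · exact hnA2 (hpv ▸ hπA1)
      · exact hπn1 (hpv.symm ▸ hA2)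
      · exact hπn1 (hpv.symm ▸ hA2)
      · exact hnA1 (hvp.symm ▸ hπA2)
      · have h6 : v' = π v := hpv.symm
        have h7 : v = π v' := hvp
        rw [← h6] at ht1
        rw [← h7] at ht2
        omega
  refine ⟨S, hZFS, ?_⟩
  have hmt : ∀ a ∈ S, φ a ∈ Subtype.val '' B := fun a ha => (hcases a ha).1
  have h1 : S.ncard ≤ (Subtype.val '' B).ncard :=
    Set.ncard_le_ncard_of_injOn φ hmt hinj (Set.toFinite _)
  rwa [Set.ncard_image_of_injective _ Subtype.val_injective] at h1

end Main

theorem zfNumber_le_zfNumber_lineGraph' {V : Type*} [Fintype V] (G : SimpleGraph V)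
    (hiso : ∀ v : V, ∃ w, G.Adj v w) :
    zfNumber G ≤ zfNumber G.lineGraph := by
  letI : LinearOrder V := LinearOrder.lift' (Fintype.equivFin V) (Fintype.equivFin V).injective
  have hex : {n | ∃ S : Set ↥G.edgeSet, IsZeroForcingSet G.lineGraph S ∧ S.ncard = n}.Nonempty :=
    ⟨(Set.univ : Set ↥G.edgeSet).ncard, Set.univ, fun v => .init (Set.mem_univ v), rfl⟩
  obtain ⟨B, hB, hcard⟩ := Nat.sInf_mem hex
  obtain ⟨S, hS, hle⟩ := main_aux G hiso B hB
  have h1 : zfNumber G ≤ S.ncard := Nat.sInf_le ⟨S, hS, rfl⟩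
  have h2 : zfNumber G.lineGraph = B.ncard := hcard.symm
  omega


theorem zfNumber_le_zfNumber_lineGraph {V : Type*} [Fintype V] (G : SimpleGraph V)
    (hiso : ∀ v : V, ∃ w, G.Adj v w) :
    zfNumber G ≤ zfNumber G.lineGraph := zfNumber_le_zfNumber_lineGraph' G hiso

end Paper
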